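/- For every partition (L,R,U) of N⁺, the extended inequality is valid for X: for every (x,y,t) ∈ X, φ_{L,R,U}(x,y) ≤ t, where φ_{L,R,U}(x,y) is the optimal value of: minimize (y(L)−λ₀)²/(1−x(R)−x(U)+μ(R)+μ₀) + Σ_{i∈R} (y_i−λ_i)²/(x_i−μ_i) + (y(U)−y(N⁻)+λ₀+λ(R)+ζ)²/(x(U)−μ₀) over λ ∈ ℝ₊^R, μ ∈ ℝ₊^R, λ₀, μ₀, ζ ∈ ℝ₊ subject to 1−x(R)−x(U)+μ(R)+μ₀ ≥ 0, μ_i ≤ x_i for all i ∈ R, and μ₀ ≤ x(U). -/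

import Mathlib

open Finset

noncomputable section

variable {ι : Type*}

/-- Extended-real ratio with the conventions `a/0 = +∞` for `a > 0` and `0/0 = 0`
(and `a/0 = −∞` for `a < 0`, which never occurs in the statements below). -/
def ratio (a b : ℝ) : EReal :=
  if b = 0 then (if 0 < a then (⊤ : EReal) else if a < 0 then (⊥ : EReal) else (0 : EReal))
  else ((a / b : ℝ) : EReal)

/-- Objective of the extended formulation of the lifted supermodular inequality for the
partition `(L,R,U)`; `Nother` is the "other side" of the partition of `N`
(`N⁻` for the inequalities over `B⁺`, and `N⁺` for those over `B⁻`). -/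
def objX [Fintype ι] (Nother L R U : Finset ι) (x y : ι → ℝ)
    (lam mu : ι → ℝ) (lam0 mu0 zeta : ℝ) : EReal :=
  ratio (((∑ i ∈ L, y i) - lam0) ^ 2)
      (1 - (∑ i ∈ R, x i) - (∑ i ∈ U, x i) + (∑ i ∈ R, mu i) + mu0)
    + (∑ i ∈ R, ratio ((y i - lam i) ^ 2) (x i - mu i))
    + ratio (((∑ i ∈ U, y i) - (∑ i ∈ Nother, y i) + lam0 + (∑ i ∈ R, lam i) + zeta) ^ 2)
      ((∑ i ∈ U, x i) - mu0)

/-- Feasibility of `(λ, μ, λ₀, μ₀, ζ)` in the extended formulation: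
`λ, μ ∈ ℝ₊^R`, `λ₀, μ₀, ζ ∈ ℝ₊`, `1 − x(R) − x(U) + μ(R) + μ₀ ≥ 0`,
`μ_i ≤ x_i` for `i ∈ R`, and `μ₀ ≤ x(U)`. -/
def feasX [Fintype ι] (R U : Finset ι) (x : ι → ℝ)
    (lam mu : ι → ℝ) (lam0 mu0 zeta : ℝ) : Prop :=
  (∀ i, 0 ≤ lam i) ∧ (∀ i, 0 ≤ mu i) ∧ 0 ≤ lam0 ∧ 0 ≤ mu0 ∧ 0 ≤ zeta ∧
  0 ≤ 1 - (∑ i ∈ R, x i) - (∑ i ∈ U, x i) + (∑ i ∈ R, mu i) + mu0 ∧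
  (∀ i ∈ R, mu i ≤ x i) ∧ mu0 ≤ ∑ i ∈ U, x i

/-- `φ_{L,R,U}(x,y)`: the optimal value of the extended formulation. -/
def phiX [Fintype ι] (Nother L R U : Finset ι) (x y : ι → ℝ) : EReal :=
  sInf {v : EReal | ∃ lam mu : ι → ℝ, ∃ lam0 mu0 zeta : ℝ,
    feasX R U x lam mu lam0 mu0 zeta ∧ v = objX Nother L R U x y lam mu lam0 mu0 zeta}

/-- The rank-one set `X` associated with the partition `N = N⁺ ∪ N⁻`. -/
def XSet [Fintype ι] (Np Nm : Finset ι) : Set ((ι → ℝ) × (ι → ℝ) × ℝ) :=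
  {p | (∀ i, p.1 i = 0 ∨ p.1 i = 1) ∧ (∀ i, 0 ≤ p.2.1 i) ∧ 0 ≤ p.2.2 ∧
       ((∑ i ∈ Np, p.2.1 i) - (∑ i ∈ Nm, p.2.1 i)) ^ 2 ≤ p.2.2 ∧
       ∀ i, p.2.1 i * (1 - p.1 i) = 0}

lemma ratio_zero_left (b : ℝ) : ratio 0 b = 0 := by
  unfold ratio; split_ifs with h h1 <;> simp_all

lemma ecoe_sum {ι : Type*} (s : Finset ι) (f : ι → ℝ) :
    ((∑ i ∈ s, f i : ℝ) : EReal) = ∑ i ∈ s, ((f i : ℝ) : EReal) :=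
  map_sum (⟨⟨Real.toEReal, EReal.coe_zero⟩, EReal.coe_add⟩ : ℝ →+ EReal) f s

lemma ratio_sq_div (a k P : ℝ) (ha : 0 ≤ a) (hP : 0 < P) :
    ratio ((k * a) ^ 2) (a / P) = ((k ^ 2 * a * P : ℝ) : EReal) := by
  rcases ha.eq_or_lt with h | h
  · rw [← h]; simpa using ratio_zero_left (0 / P)
  · unfold ratio
    rw [if_neg (by positivity)]
    norm_cast
    field_simp

/-- For every partition `(L,R,U)` of `N⁺`, the extended inequality
`φ_{L,R,U}(x,y) ≤ t` is valid for every `(x,y,t) ∈ X`. -/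
theorem stmt_17 [Fintype ι] [DecidableEq ι] (Np Nm : Finset ι)
    (hNdisj : Disjoint Np Nm) (hNunion : Np ∪ Nm = Finset.univ)
    (L R U : Finset ι) (hLR : Disjoint L R) (hLU : Disjoint L U) (hRU : Disjoint R U)
    (hpart : L ∪ R ∪ U = Np)
    (x y : ι → ℝ) (t : ℝ) (hmem : (x, y, t) ∈ XSet Np Nm) :
    phiX Nm L R U x y ≤ ((t : ℝ) : EReal) := by
  obtain ⟨hx, hy, ht0, hsq, hyx⟩ := hmem
  simp only at hx hy ht0 hsq hyx
  have hy0 : ∀ i, x i = 0 → y i = 0 := by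
    intro i hxi
    have := hyx i
    rw [hxi] at this
    simpa using this
  have hsplit : (∑ i ∈ Np, y i) = (∑ i ∈ L, y i) + (∑ i ∈ R, y i) + (∑ i ∈ U, y i) := by
    rw [← hpart, sum_union (disjoint_union_left.mpr ⟨hLU, hRU⟩), sum_union hLR]
  have hLnn : (0:ℝ) ≤ ∑ i ∈ L, y i := sum_nonneg fun i _ => hy i
  have hRnn : (0:ℝ) ≤ ∑ i ∈ R, y i := sum_nonneg fun i _ => hy i
  have hUnn : (0:ℝ) ≤ ∑ i ∈ U, y i := sum_nonneg fun i _ => hy i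
  have hmnn : (0:ℝ) ≤ ∑ i ∈ Nm, y i := sum_nonneg fun i _ => hy i
  rcases le_or_gt (∑ i ∈ Np, y i) (∑ i ∈ Nm, y i) with hD | hD
  · -- trivial case: objective 0 via zeta
    refine le_trans (sInf_le ⟨y, x, ∑ i ∈ L, y i, ∑ i ∈ U, x i,
      (∑ i ∈ Nm, y i) - (∑ i ∈ Np, y i), ?_, rfl⟩) ?_
    · refine ⟨hy, fun i => ?_, hLnn, sum_nonneg fun i _ => ?_, by linarith,
        by linarith, fun i _ => le_refl _, le_refl _⟩
      · rcases hx i with h | h <;> rw [h] <;> norm_num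
      · rcases hx i with h | h <;> rw [h] <;> norm_num
    · have hobj : objX Nm L R U x y y x (∑ i ∈ L, y i) (∑ i ∈ U, x i)
          ((∑ i ∈ Nm, y i) - (∑ i ∈ Np, y i)) = 0 := by
        unfold objX
        rw [show (∑ i ∈ L, y i) - (∑ i ∈ L, y i) = 0 from sub_self _,
          show (∑ i ∈ U, y i) - (∑ i ∈ Nm, y i) + (∑ i ∈ L, y i) + (∑ i ∈ R, y i)
            + ((∑ i ∈ Nm, y i) - (∑ i ∈ Np, y i)) = 0 by rw [hsplit]; ring]
        simp [sub_self, ratio_zero_left]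
      rw [hobj]
      exact_mod_cast ht0
  · -- main case
    set P := ∑ i ∈ Np, y i with hPdef
    have hPpos : 0 < P := lt_of_le_of_lt hmnn hD
    set c := (∑ i ∈ Nm, y i) / P with hcdef
    have hcnn : 0 ≤ c := div_nonneg hmnn hPpos.le
    have hRsub : R ⊆ Np := fun i hi => hpart ▸ mem_union_left U (mem_union_right L hi)
    have hUsub : U ⊆ Np := fun i hi => hpart ▸ mem_union_right _ hi
    have hxP : ∀ i ∈ Np, y i ≤ P * x i := by
      intro i hi
      rcases hx i with h | h
      · rw [h, mul_zero, hy0 i h]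
      · rw [h, mul_one]; exact single_le_sum (fun j _ => hy j) hi
    have hRyx : ∀ i ∈ R, y i / P ≤ x i := fun i hi =>
      (div_le_iff₀ hPpos).mpr (by rw [mul_comm]; exact hxP i (hRsub hi))
    have hUyx : (∑ i ∈ U, y i) / P ≤ ∑ i ∈ U, x i := by
      rw [div_le_iff₀ hPpos]
      calc (∑ i ∈ U, y i) ≤ ∑ i ∈ U, P * x i := sum_le_sum fun i hi => hxP i (hUsub hi)
        _ = (∑ i ∈ U, x i) * P := by rw [← mul_sum, mul_comm]
    have hmuR : (∑ i ∈ R, if i ∈ R then x i - y i / P else 0)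
        = (∑ i ∈ R, x i) - (∑ i ∈ R, y i) / P := by
      rw [sum_congr rfl fun i hi => if_pos hi, sum_sub_distrib, sum_div]
    refine le_trans (sInf_le ⟨fun i => c * y i,
      fun i => if i ∈ R then x i - y i / P else 0,
      c * ∑ i ∈ L, y i, (∑ i ∈ U, x i) - (∑ i ∈ U, y i) / P, 0, ?_, rfl⟩) ?_
    · refine ⟨fun i => mul_nonneg hcnn (hy i), fun i => ?_,
        mul_nonneg hcnn hLnn, by linarith, le_refl 0, ?_, fun i hi => ?_, by
          linarith [div_nonneg hUnn hPpos.le]⟩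
      · dsimp only
        split_ifs with h
        · linarith [hRyx i h]
        · exact le_refl 0
      · rw [hmuR]
        have h1 : (∑ i ∈ R, y i) / P + (∑ i ∈ U, y i) / P ≤ 1 := by
          rw [← add_div, div_le_one hPpos]
          linarith
        linarith
      · dsimp only
        rw [if_pos hi]
        linarith [div_nonneg (hy i) hPpos.le]
    · have hobj : objX Nm L R U x y (fun i => c * y i)
          (fun i => if i ∈ R then x i - y i / P else 0)
          (c * ∑ i ∈ L, y i) ((∑ i ∈ U, x i) - (∑ i ∈ U, y i) / P) 0
          = (((P - ∑ i ∈ Nm, y i) ^ 2 : ℝ) : EReal) := by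
        unfold objX
        dsimp only
        have h1c : (1 - c) * P = P - ∑ i ∈ Nm, y i := by
          rw [hcdef]; field_simp
        rw [show (∑ i ∈ L, y i) - c * (∑ i ∈ L, y i) = (1 - c) * ∑ i ∈ L, y i by ring]
        rw [hmuR]
        rw [show 1 - (∑ i ∈ R, x i) - (∑ i ∈ U, x i)
            + ((∑ i ∈ R, x i) - (∑ i ∈ R, y i) / P)
            + ((∑ i ∈ U, x i) - (∑ i ∈ U, y i) / P) = (∑ i ∈ L, y i) / P by
          field_simp; linarith]
        rw [show (∑ i ∈ U, x i) - ((∑ i ∈ U, x i) - (∑ i ∈ U, y i) / P)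
            = (∑ i ∈ U, y i) / P by ring]
        rw [show (∑ i ∈ U, y i) - (∑ i ∈ Nm, y i) + c * (∑ i ∈ L, y i)
            + (∑ i ∈ R, c * y i) + 0 = (1 - c) * ∑ i ∈ U, y i by
          rw [← mul_sum]
          have hcP : c * P = ∑ i ∈ Nm, y i := by rw [hcdef]; field_simp
          linear_combination hcP - c * hsplit]
        rw [ratio_sq_div _ _ _ hLnn hPpos, ratio_sq_div _ _ _ hUnn hPpos]
        have hRsum : (∑ i ∈ R, ratio ((y i - c * y i) ^ 2)
              (x i - if i ∈ R then x i - y i / P else 0))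
            = ∑ i ∈ R, (((1 - c) ^ 2 * y i * P : ℝ) : EReal) := by
          refine Finset.sum_congr rfl fun i hi => ?_
          rw [if_pos hi, show x i - (x i - y i / P) = y i / P by ring,
            show y i - c * y i = (1 - c) * y i by ring,
            ratio_sq_div _ _ _ (hy i) hPpos]
        rw [hRsum]
        rw [← ecoe_sum]
        norm_cast
        rw [show (∑ i ∈ R, (1 - c) ^ 2 * y i * P)
            = (1 - c) ^ 2 * (∑ i ∈ R, y i) * P by
          rw [← Finset.sum_mul, ← Finset.mul_sum]]
        linear_combination (-(1 - c) ^ 2 * P) * hsplit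
          + ((1 - c) * P + (P - ∑ i ∈ Nm, y i)) * h1c
      rw [hobj]
      exact EReal.coe_le_coe_iff.mpr hsq

end
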